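/- In ℂ[x,y,z], set p = x²z − y³z² − 3y²z + 2x − 3y − 1, Q = (1/2)y³z² + (3/2)y²z − (1/2)xz + (3/2)y + 1/2, and q = x − Q². Then there is no ℂ-algebra automorphism σ of ℂ[x,y,z] such that σ(⟨p⟩) = ⟨q⟩; that is, although V(p) and V(q) are isomorphic, no algebraic automorphism of ℂ³ takes V(p) onto V(q). -/

import Mathlib

open MvPolynomial

private lemma tdp_unit_eq_C : ∀ (n : ℕ) (w : MvPolynomial (Fin n) ℂ), IsUnit w → ∃ c : ℂ, w = C c := by
  intro n
  induction n with
  | zero =>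
    intro w _
    exact ⟨(isEmptyRingEquiv ℂ (Fin 0)) w, ((isEmptyRingEquiv ℂ (Fin 0)).symm_apply_apply w).symm⟩
  | succ n ih =>
    intro w hw
    have h1 : IsUnit (finSuccEquiv ℂ n w) := hw.map (finSuccEquiv ℂ n)
    have hdeg : (finSuccEquiv ℂ n w).degree = 0 := Polynomial.degree_eq_zero_of_isUnit h1
    have h2 : finSuccEquiv ℂ n w = Polynomial.C ((finSuccEquiv ℂ n w).coeff 0) :=
      Polynomial.eq_C_of_degree_eq_zero hdeg
    have h3 : IsUnit ((finSuccEquiv ℂ n w).coeff 0) := by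
      rw [h2, Polynomial.isUnit_C] at h1; exact h1
    obtain ⟨c, hc⟩ := ih _ h3
    refine ⟨c, ?_⟩
    have : finSuccEquiv ℂ n w = finSuccEquiv ℂ n (C c) := by
      rw [h2, hc, finSuccEquiv_apply]
      simp
    exact (finSuccEquiv ℂ n).injective this

private lemma tdp_taylor_mem (a : Fin 3 → ℂ) (f : MvPolynomial (Fin 3) ℂ) :
    f - C (eval a f) - ∑ i : Fin 3, C (eval a (pderiv i f)) * (X i - C (a i))
      ∈ (vanishingIdeal ℂ {a} : Ideal (MvPolynomial (Fin 3) ℂ)) ^ 2 := by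
  set N : Ideal (MvPolynomial (Fin 3) ℂ) := vanishingIdeal ℂ {a} with hN
  have hX : ∀ i : Fin 3, (X i - C (a i)) ∈ N := by
    intro i
    rw [hN, mem_vanishingIdeal_singleton_iff]
    simp
  have hXX : ∀ i j : Fin 3, (X i - C (a i)) * (X j - C (a j)) ∈ N ^ 2 := by
    intro i j
    rw [pow_two]
    exact Ideal.mul_mem_mul (hX i) (hX j)
  induction f using MvPolynomial.induction_on with
  | C r => simp
  | add f g hf hg =>
    have := Ideal.add_mem _ hf hg
    convert this using 1
    simp only [map_add, Fin.sum_univ_three]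
    ring
  | mul_X f j hf =>
    have key : f * X j - C (eval a (f * X j)) - ∑ i : Fin 3, C (eval a (pderiv i (f * X j))) * (X i - C (a i))
        = (f - C (eval a f) - ∑ i : Fin 3, C (eval a (pderiv i f)) * (X i - C (a i))) * X j
          + ∑ i : Fin 3, C (eval a (pderiv i f)) * ((X i - C (a i)) * (X j - C (a j))) := by
      have hev : ∀ i : Fin 3, eval a (pderiv i (f * X j)) =
          eval a (pderiv i f) * a j + (if j = i then eval a f else 0) := by
        intro i
        rw [pderiv_mul, pderiv_X]
        by_cases h : j = i <;> simp [h, Pi.single_apply, mul_comm]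
      simp only [hev, map_mul, eval_X, map_add, C_mul, Fin.sum_univ_three, apply_ite C, map_zero]
      fin_cases j <;> · norm_num [Fin.ext_iff, show ((⟨2, by omega⟩ : Fin 3)) = 2 from rfl]; ring
    rw [key]
    refine Ideal.add_mem _ (Ideal.mul_mem_right _ _ hf) (Ideal.sum_mem _ ?_)
    intro i _
    exact Ideal.mul_mem_left _ _ (hXX i j)

private lemma tdp_span4_rank_le_three {M : Type} [AddCommGroup M] [Module ℂ M]
    (w0 w1 w2 w3 : M) (c1 c2 c3 : ℂ) (h1 : c1 ≠ 0)
    (hrel : c1 • w1 + c2 • w2 + c3 • w3 = 0)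
    (hspan : ∀ f : M, f ∈ Submodule.span ℂ ({w0, w1, w2, w3} : Set M)) :
    Module.rank ℂ M ≤ 3 := by
  set v : Fin 3 → M := ![w0, w2, w3] with hv
  have hmem : ∀ x ∈ ({w0, w1, w2, w3} : Set M), x ∈ Submodule.span ℂ (Set.range v) := by
    have h0 : w0 ∈ Set.range v := ⟨0, rfl⟩
    have h2 : w2 ∈ Set.range v := ⟨1, rfl⟩
    have h3 : w3 ∈ Set.range v := ⟨2, rfl⟩
    have hw1 : w1 ∈ Submodule.span ℂ (Set.range v) := by
      have : w1 = (-(c1⁻¹ * c2)) • w2 + (-(c1⁻¹ * c3)) • w3 := by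
        have h := congrArg (fun x => c1⁻¹ • x) hrel
        simp only [smul_add, smul_smul, inv_mul_cancel₀ h1, one_smul, smul_zero] at h
        have h' : w1 = -((c1⁻¹ * c2) • w2 + (c1⁻¹ * c3) • w3) := by
          linear_combination (norm := module) h
        rw [h']
        module
      rw [this]
      exact Submodule.add_mem _
        (Submodule.smul_mem _ _ (Submodule.subset_span h2))
        (Submodule.smul_mem _ _ (Submodule.subset_span h3))
    intro x hx
    simp only [Set.mem_insert_iff, Set.mem_singleton_iff] at hx
    rcases hx with rfl | rfl | rfl | rfl
    · exact Submodule.subset_span h0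
    · exact hw1
    · exact Submodule.subset_span h2
    · exact Submodule.subset_span h3
  have htop : Submodule.span ℂ (Set.range v) = ⊤ := by
    rw [eq_top_iff]
    intro f _
    exact Submodule.span_le.mpr hmem (hspan f)
  have := rank_span_le (R := ℂ) (Set.range v)
  rw [htop] at this
  rw [← rank_top ℂ M]
  refine le_trans this (le_trans Cardinal.mk_range_le ?_)
  simp [Cardinal.mk_fin]

set_option maxHeartbeats 1000000 in
private lemma tdp_rank_quot_le_three (a : Fin 3 → ℂ) (u : MvPolynomial (Fin 3) ℂ)
    (hu : eval a u = 0) (k : Fin 3) (hk : eval a (pderiv k u) ≠ 0) :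
    Module.rank ℂ (MvPolynomial (Fin 3) ℂ ⧸
      ((vanishingIdeal ℂ {a} : Ideal (MvPolynomial (Fin 3) ℂ)) ^ 2 ⊔ Ideal.span {u})) ≤ 3 := by
  set N : Ideal (MvPolynomial (Fin 3) ℂ) := vanishingIdeal ℂ {a} with hN
  set K : Ideal (MvPolynomial (Fin 3) ℂ) := N ^ 2 ⊔ Ideal.span {u} with hK
  set π := Ideal.Quotient.mkₐ ℂ K with hπ
  have hzero : ∀ g ∈ K, π g = 0 := by
    intro g hg
    rw [hπ, Ideal.Quotient.mkₐ_eq_mk, Ideal.Quotient.eq_zero_iff_mem]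
    exact hg
  have hCone : ∀ x : ℂ, π (C x) = x • π 1 := by
    intro x
    have hx : (C x : MvPolynomial (Fin 3) ℂ) = x • 1 := by rw [smul_eq_C_mul, mul_one]
    rw [hx, map_smul]
  have hrem : ∀ f : MvPolynomial (Fin 3) ℂ,
      π f = eval a f • π 1 + ∑ i : Fin 3, eval a (pderiv i f) • π (X i - C (a i)) := by
    intro f
    have h0 : π (f - (C (eval a f) + ∑ i : Fin 3, C (eval a (pderiv i f)) * (X i - C (a i)))) = 0 := by
      refine hzero _ (Ideal.mem_sup_left ?_)
      have h := tdp_taylor_mem a f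
      rw [sub_add_eq_sub_sub]
      exact h
    rw [map_sub, sub_eq_zero] at h0
    rw [h0, map_add, map_sum, hCone]
    congr 1
    refine Finset.sum_congr rfl fun i _ => ?_
    rw [← smul_eq_C_mul, map_smul]
  have hrel : ∑ i : Fin 3, eval a (pderiv i u) • π (X i - C (a i)) = 0 := by
    have h0 : π u = 0 := hzero u (Ideal.mem_sup_right (Ideal.subset_span rfl))
    rw [hrem u, hu, zero_smul, zero_add] at h0
    exact h0
  have hspan : ∀ f : MvPolynomial (Fin 3) ℂ ⧸ K, f ∈ Submodule.span ℂ
      ({π 1, π (X 0 - C (a 0)), π (X 1 - C (a 1)), π (X 2 - C (a 2))} :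
        Set (MvPolynomial (Fin 3) ℂ ⧸ K)) := by
    intro f
    obtain ⟨g, rfl⟩ := Ideal.Quotient.mkₐ_surjective ℂ K f
    rw [hrem g, Fin.sum_univ_three]
    refine Submodule.add_mem _ ?_ (Submodule.add_mem _ (Submodule.add_mem _ ?_ ?_) ?_) <;>
      refine Submodule.smul_mem _ _ (Submodule.subset_span ?_) <;> simp
  rw [Fin.sum_univ_three] at hrel
  fin_cases k
  · exact tdp_span4_rank_le_three (π 1) (π (X 0 - C (a 0))) (π (X 1 - C (a 1))) (π (X 2 - C (a 2)))
      (eval a (pderiv 0 u)) (eval a (pderiv 1 u)) (eval a (pderiv 2 u)) hk hrel hspan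
  · refine tdp_span4_rank_le_three (π 1) (π (X 1 - C (a 1))) (π (X 0 - C (a 0))) (π (X 2 - C (a 2)))
      (eval a (pderiv 1 u)) (eval a (pderiv 0 u)) (eval a (pderiv 2 u)) hk ?_ ?_
    · rw [← hrel]; abel
    · intro f
      refine Submodule.span_mono ?_ (hspan f)
      intro x hx
      simp only [Set.mem_insert_iff, Set.mem_singleton_iff] at hx ⊢
      tauto
  · refine tdp_span4_rank_le_three (π 1) (π (X 2 - C (a 2))) (π (X 0 - C (a 0))) (π (X 1 - C (a 1)))
      (eval a (pderiv 2 u)) (eval a (pderiv 0 u)) (eval a (pderiv 1 u)) hk ?_ ?_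
    · rw [← hrel]; abel
    · intro f
      refine Submodule.span_mono ?_ (hspan f)
      intro x hx
      simp only [Set.mem_insert_iff, Set.mem_singleton_iff] at hx ⊢
      tauto

set_option maxHeartbeats 1000000 in
private lemma tdp_four_le_rank_quot (a : Fin 3 → ℂ) (u : MvPolynomial (Fin 3) ℂ)
    (h0 : eval a u = 0) (hd : ∀ i, eval a (pderiv i u) = 0) :
    4 ≤ Module.rank ℂ (MvPolynomial (Fin 3) ℂ ⧸
      ((vanishingIdeal ℂ {a} : Ideal (MvPolynomial (Fin 3) ℂ)) ^ 2 ⊔ Ideal.span {u})) := by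
  set N : Ideal (MvPolynomial (Fin 3) ℂ) := vanishingIdeal ℂ {a} with hN
  set K : Ideal (MvPolynomial (Fin 3) ℂ) := N ^ 2 ⊔ Ideal.span {u} with hK
  set π := Ideal.Quotient.mkₐ ℂ K with hπ
  set W : Ideal (MvPolynomial (Fin 3) ℂ) :=
    { carrier := {f | eval a f = 0 ∧ ∀ i, eval a (pderiv i f) = 0}
      add_mem' := by
        rintro f g ⟨hf1, hf2⟩ ⟨hg1, hg2⟩
        refine ⟨by simp [hf1, hg1], fun i => by simp [hf2 i, hg2 i]⟩
      zero_mem' := by simp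
      smul_mem' := by
        rintro c f ⟨hf1, hf2⟩
        refine ⟨by simp [smul_eq_mul, hf1], fun i => ?_⟩
        simp [smul_eq_mul, pderiv_mul, hf1, hf2 i] } with hW
  have hKW : K ≤ W := by
    rw [hK]
    refine sup_le ?_ ?_
    · rw [pow_two]
      refine Ideal.mul_le.mpr fun f hf g hg => ?_
      rw [hN, mem_vanishingIdeal_singleton_iff] at hf hg
      rw [aeval_eq_eval] at hf hg
      refine ⟨by simp [hf, hg], fun i => by simp [pderiv_mul, hf, hg]⟩
    · rw [Ideal.span_le]
      rintro f rfl
      exact ⟨h0, hd⟩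
  set v : Fin 4 → (MvPolynomial (Fin 3) ℂ ⧸ K) :=
    ![π 1, π (X 0 - C (a 0)), π (X 1 - C (a 1)), π (X 2 - C (a 2))] with hv
  have hli : LinearIndependent ℂ v := by
    rw [Fintype.linearIndependent_iff]
    intro t ht
    have hsm : ∀ (x : ℂ) (g : MvPolynomial (Fin 3) ℂ), π (C x * g) = x • π g := by
      intro x g
      rw [← smul_eq_C_mul, map_smul]
    have hcombo : π (C (t 0) * 1 + C (t 1) * (X 0 - C (a 0)) + C (t 2) * (X 1 - C (a 1))
        + C (t 3) * (X 2 - C (a 2))) = 0 := by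
      rw [map_add, map_add, map_add, hsm, hsm, hsm, hsm, ← ht, hv, Fin.sum_univ_four]
      simp [Matrix.cons_val_zero, Matrix.cons_val_one, Matrix.head_cons]
    rw [hπ, Ideal.Quotient.mkₐ_eq_mk, Ideal.Quotient.eq_zero_iff_mem] at hcombo
    obtain ⟨hv0, hv1⟩ := hKW hcombo
    have e0 : t 0 = 0 := by simpa using hv0
    have e1 : t 1 = 0 := by simpa [pderiv_mul] using hv1 0
    have e2 : t 2 = 0 := by simpa [pderiv_mul] using hv1 1
    have e3 : t 3 = 0 := by simpa [pderiv_mul] using hv1 2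
    intro i
    fin_cases i <;> assumption
  have := hli.cardinal_le_rank
  rwa [Cardinal.mk_fin, Nat.cast_ofNat] at this

private lemma tdp_grad_q_ne_zero (Q q : MvPolynomial (Fin 3) ℂ)
    (hQ : Q = C (1/2 : ℂ) * X 1 ^ 3 * X 2 ^ 2 + C (3/2 : ℂ) * X 1 ^ 2 * X 2
        - C (1/2 : ℂ) * X 0 * X 2 + C (3/2 : ℂ) * X 1 + C (1/2 : ℂ))
    (hq : q = X 0 - Q ^ 2) (a : Fin 3 → ℂ) (h : ∀ i, eval a (pderiv i q) = 0) : False := by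
  have E0 := h 0
  have E1 := h 1
  have E2 := h 2
  rw [hq, hQ] at E0 E1 E2
  simp [pderiv_mul, pderiv_pow, pderiv_X, Pi.single_apply] at E0 E1 E2
  set x := a 0
  set y := a 1
  set z := a 2
  have hQv : 2⁻¹ * y ^ 3 * z ^ 2 + 3 / 2 * y ^ 2 * z - 2⁻¹ * x * z + 3 / 2 * y + 2⁻¹ ≠ 0 := by
    intro hc
    have : (1 : ℂ) = 0 := by linear_combination E0 - z * hc
    exact one_ne_zero this
  have e1' := E1.resolve_left hQv
  have e2' := E2.resolve_left hQv
  have hyz : y * z + 1 = 0 := by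
    have hsq : (y * z + 1) ^ 2 = 0 := by linear_combination (2/3 : ℂ) * e1'
    exact pow_eq_zero_iff two_ne_zero |>.mp hsq
  have hx2 : x - y ^ 2 = 0 := by linear_combination -2 * e2' + 2 * y ^ 2 * hyz
  have hz0 : z = 0 := by
    linear_combination 2 * E0 - ((y * z + 1) ^ 2 - (y * z + 1) + 2) * hyz + z ^ 2 * hx2
  have : (1 : ℂ) = 0 := by linear_combination hyz - y * hz0
  exact one_ne_zero this

/-- The inequivalence conclusion of Proposition 3.1 for the tom Dieck–Petrie hypersurface
(`x = X 0`, `y = X 1`, `z = X 2`): no `ℂ`-algebra automorphism of `ℂ[x,y,z]` maps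
`⟨p⟩` onto `⟨q⟩`. -/
theorem tomDieckPetrie_inequivalence
    (p Q q : MvPolynomial (Fin 3) ℂ)
    (hp : p = X 0 ^ 2 * X 2 - X 1 ^ 3 * X 2 ^ 2 - 3 * X 1 ^ 2 * X 2 + 2 * X 0 - 3 * X 1 - 1)
    (hQ : Q = C (1/2 : ℂ) * X 1 ^ 3 * X 2 ^ 2 + C (3/2 : ℂ) * X 1 ^ 2 * X 2
        - C (1/2 : ℂ) * X 0 * X 2 + C (3/2 : ℂ) * X 1 + C (1/2 : ℂ))
    (hq : q = X 0 - Q ^ 2) :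
    ¬ ∃ σ : MvPolynomial (Fin 3) ℂ ≃ₐ[ℂ] MvPolynomial (Fin 3) ℂ,
      Ideal.map σ (Ideal.span {p}) = Ideal.span {q} := by
  rintro ⟨σ, hσ⟩
  -- σ p is associated to q
  have hmap : Ideal.span {σ p} = Ideal.span {q} := by
    rw [← hσ, Ideal.map_span, Set.image_singleton]
  obtain ⟨w, hw⟩ := Ideal.span_singleton_eq_span_singleton.mp hmap
  obtain ⟨c, hc⟩ := tdp_unit_eq_C 3 (w : MvPolynomial (Fin 3) ℂ) w.isUnit
  have hc0 : c ≠ 0 := by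
    intro h
    have := w.isUnit
    rw [hc, h, map_zero] at this
    exact not_isUnit_zero this
  have hCinv : (C c⁻¹ : MvPolynomial (Fin 3) ℂ) * C c = 1 := by
    rw [← C_mul, inv_mul_cancel₀ hc0, C_1]
  have hσp : σ p = C c⁻¹ * q := by
    calc σ p = σ p * ((C c⁻¹ : MvPolynomial (Fin 3) ℂ) * C c) := by rw [hCinv, mul_one]
    _ = C c⁻¹ * (σ p * C c) := by ring
    _ = C c⁻¹ * q := by rw [← hc, hw]
  -- the singular point of the fiber p = -1
  set P : Fin 3 → ℂ := ![1, 1, -1] with hP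
  have hA0 : eval P (p + 1) = 0 := by
    rw [hP]
    simp [hp]
    norm_num
  have hAd : ∀ i, eval P (pderiv i (p + 1)) = 0 := by
    intro i
    have h2 : ∀ j : Fin 3, pderiv j (2 : MvPolynomial (Fin 3) ℂ) = 0 := fun j => by
      rw [show (2 : MvPolynomial (Fin 3) ℂ) = C 2 by norm_cast, pderiv_C]
    have h3 : ∀ j : Fin 3, pderiv j (3 : MvPolynomial (Fin 3) ℂ) = 0 := fun j => by
      rw [show (3 : MvPolynomial (Fin 3) ℂ) = C 3 by norm_cast, pderiv_C]
    rw [hP]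
    fin_cases i <;>
    · simp [hp, pderiv_mul, pderiv_pow, pderiv_X, Pi.single_apply, h2, h3]
      try norm_num
  set M : Ideal (MvPolynomial (Fin 3) ℂ) := vanishingIdeal ℂ {P} with hM
  set KA : Ideal (MvPolynomial (Fin 3) ℂ) := M ^ 2 ⊔ Ideal.span {p + 1} with hKA
  have h4 : 4 ≤ Module.rank ℂ (MvPolynomial (Fin 3) ℂ ⧸ KA) :=
    tdp_four_le_rank_quot P (p + 1) hA0 hAd
  -- transport along σ
  set KB : Ideal (MvPolynomial (Fin 3) ℂ) := Ideal.map σ KA with hKB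
  have hrank : Module.rank ℂ (MvPolynomial (Fin 3) ℂ ⧸ KA)
      = Module.rank ℂ (MvPolynomial (Fin 3) ℂ ⧸ KB) := by
    exact (Ideal.quotientEquivAlg KA KB σ rfl).toLinearEquiv.rank_eq
  -- identify KB
  set u : MvPolynomial (Fin 3) ℂ := σ (p + 1) with hu
  have hKB' : KB = (Ideal.map σ M) ^ 2 ⊔ Ideal.span {u} := by
    rw [hKB, hKA, Ideal.map_sup, Ideal.map_pow, Ideal.map_span, Set.image_singleton]
  -- the image of M is a maximal ideal, hence a vanishing ideal
  have hMmax : (Ideal.map σ M).IsMaximal := by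
    rw [hM]
    infer_instance
  obtain ⟨a, ha⟩ := (isMaximal_iff_eq_vanishingIdeal_singleton (I := Ideal.map σ M)).mp hMmax
  -- u vanishes at a
  have hu0 : eval a u = 0 := by
    have hmem : u ∈ Ideal.map σ M := by
      refine Ideal.mem_map_of_mem _ ?_
      rw [hM, mem_vanishingIdeal_singleton_iff]
      exact hA0
    rw [ha, mem_vanishingIdeal_singleton_iff] at hmem
    exact hmem
  -- u has nonvanishing gradient at a
  have hu' : u = C c⁻¹ * q + 1 := by
    rw [hu, map_add, map_one, hσp]
  have hgrad : ∃ k, eval a (pderiv k u) ≠ 0 := by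
    by_contra hcon
    push_neg at hcon
    refine tdp_grad_q_ne_zero Q q hQ hq a fun i => ?_
    have := hcon i
    rw [hu', map_add, pderiv_one, add_zero, pderiv_C_mul, map_mul, eval_C] at this
    exact (mul_eq_zero.mp this).resolve_left (inv_ne_zero hc0)
  obtain ⟨k, hk⟩ := hgrad
  have h3 : Module.rank ℂ (MvPolynomial (Fin 3) ℂ ⧸ KB) ≤ 3 := by
    rw [hKB', ha]
    exact tdp_rank_quot_le_three a u hu0 k hk
  rw [hrank] at h4
  have : (4 : Cardinal) ≤ 3 := le_trans h4 h3
  norm_num at this
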